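/- Let G = ∏_{i=1}^t K_{n_i} be a Hamming graph with constant threshold 2, and let S be a nonempty vertex set. If the activation closure of S equals a disjoint union ∪_{i=1}^k x^i_{A_i} of subcubes with pairwise Hamming distance at least 3 between distinct subcubes, then ∑_{i=1}^k |A_i| ≥ (2 + t)·k − 2·|S|. -/

import Mathlib

/-- The Hamming graph `∏ K_{n i}`: vertices are tuples, adjacent iff they differ
in exactly one coordinate (Hamming distance 1). -/
def hammingGraph {t : ℕ} (n : Fin t → ℕ) : SimpleGraph (Π i, Fin (n i)) where
  Adj x y := hammingDist x y = 1
  symm := ⟨fun x y (h : hammingDist x y = 1) => (hammingDist_comm y x).trans h⟩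
  loopless := ⟨fun x (h : hammingDist x x = 1) => by simp [hammingDist_self] at h⟩

/-- The "subcube" `x_A`: all vertices agreeing with `x` on every coordinate in `A`. -/
def subcube {t : ℕ} {n : Fin t → ℕ} (x : Π i, Fin (n i)) (A : Set (Fin t)) :
    Set (Π i, Fin (n i)) :=
  {z | ∀ i ∈ A, z i = x i}

/-- A set `A` is closed under activation: every vertex with at least `θ v`
neighbors in `A` already belongs to `A`. -/
def activationClosed {V : Type*} [Fintype V] (G : SimpleGraph V) (θ : V → ℤ)
    (A : Set V) : Prop :=
  ∀ v : V, θ v ≤ ((A ∩ G.neighborSet v).ncard : ℤ) → v ∈ A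

/-- The activation closure `[S]_θ`: the smallest activation-closed superset of `S`. -/
def activationClosure {V : Type*} [Fintype V] (G : SimpleGraph V) (θ : V → ℤ)
    (S : Set V) : Set V :=
  ⋂₀ {A : Set V | S ⊆ A ∧ activationClosed G θ A}

namespace HammingBootstrap

section Basic

variable {V : Type*} [Fintype V] {G : SimpleGraph V} {θ : V → ℤ} {S A : Set V}

lemma subset_activationClosure : S ⊆ activationClosure G θ S :=
  fun _ hv => Set.mem_sInter.mpr fun _ hA => hA.1 hv

lemma activationClosure_subset (hSA : S ⊆ A) (hA : activationClosed G θ A) :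
    activationClosure G θ S ⊆ A :=
  Set.sInter_subset_of_mem ⟨hSA, hA⟩

lemma activationClosure_closed : activationClosed G θ (activationClosure G θ S) := by
  intro v hv
  rw [activationClosure, Set.mem_sInter]
  rintro A ⟨hSA, hA⟩
  apply hA v
  refine le_trans hv ?_
  have hsub : activationClosure G θ S ∩ G.neighborSet v ⊆ A ∩ G.neighborSet v :=
    Set.inter_subset_inter_left _ (activationClosure_subset hSA hA)
  exact_mod_cast Set.ncard_le_ncard hsub (Set.toFinite _)

end Basic

section Hamming

variable {t : ℕ} {n : Fin t → ℕ}

lemma mem_subcube_self (x : Π i, Fin (n i)) (A : Set (Fin t)) : x ∈ subcube x A :=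
  fun _ _ => rfl

lemma subcube_closed (x : Π i, Fin (n i)) (A : Set (Fin t)) :
    activationClosed (hammingGraph n) (fun _ => (2 : ℤ)) (subcube x A) := by
  intro v hv
  by_contra hvA
  simp only [subcube, Set.mem_setOf_eq, not_forall] at hvA
  obtain ⟨i, hiA, hvi⟩ := hvA
  have hv' : (2 : ℤ) ≤ ((subcube x A ∩ (hammingGraph n).neighborSet v).ncard : ℤ) := hv
  have h2 : 1 < (subcube x A ∩ (hammingGraph n).neighborSet v).ncard := by
    have : (2 : ℕ) ≤ (subcube x A ∩ (hammingGraph n).neighborSet v).ncard := by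
      exact_mod_cast hv'
    omega
  obtain ⟨w1, w2, hw1, hw2, hne⟩ := (Set.one_lt_ncard_iff (Set.toFinite _)).mp h2
  have key : ∀ w ∈ subcube x A ∩ (hammingGraph n).neighborSet v,
      w = Function.update v i (x i) := by
    rintro w ⟨hwc, hwn⟩
    have hadj : hammingDist v w = 1 := hwn
    rw [hammingDist, Finset.card_eq_one] at hadj
    obtain ⟨j, hj⟩ := hadj
    have hi : i ∈ (Finset.univ.filter fun j => v j ≠ w j) := by
      simp only [Finset.mem_filter, Finset.mem_univ, true_and]
      rw [hwc i hiA]; exact hvi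
    rw [hj, Finset.mem_singleton] at hi
    funext j'
    rcases eq_or_ne j' i with rfl | hne'
    · rw [Function.update_self]; exact hwc _ hiA
    · rw [Function.update_of_ne hne']
      by_contra hc
      have hmem : j' ∈ (Finset.univ.filter fun j => v j ≠ w j) := by
        simp only [Finset.mem_filter, Finset.mem_univ, true_and]
        exact fun h => hc h.symm
      rw [hj, Finset.mem_singleton] at hmem
      exact hne' (hmem.trans hi.symm)
  exact hne ((key w1 ⟨hw1.1, hw1.2⟩).trans (key w2 ⟨hw2.1, hw2.2⟩).symm)

lemma iUnion_far_closed {ι : Sort*} (T : ι → Set (Π i, Fin (n i)))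
    (hcl : ∀ j, activationClosed (hammingGraph n) (fun _ => (2 : ℤ)) (T j))
    (hfar : ∀ a b, a ≠ b → ∀ u ∈ T a, ∀ v ∈ T b, 3 ≤ hammingDist u v) :
    activationClosed (hammingGraph n) (fun _ => (2 : ℤ)) (⋃ j, T j) := by
  intro v hv
  have hv' : (2 : ℤ) ≤ (((⋃ j, T j) ∩ (hammingGraph n).neighborSet v).ncard : ℤ) := hv
  have h2 : 2 ≤ ((⋃ j, T j) ∩ (hammingGraph n).neighborSet v).ncard := by exact_mod_cast hv'
  obtain ⟨w1, hw1⟩ := (Set.ncard_pos (Set.toFinite _)).mp (lt_of_lt_of_le (by norm_num) h2)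
  obtain ⟨a, hw1a⟩ := Set.mem_iUnion.mp hw1.1
  have hsub : (⋃ j, T j) ∩ (hammingGraph n).neighborSet v ⊆ T a ∩ (hammingGraph n).neighborSet v := by
    rintro w ⟨hwu, hwn⟩
    obtain ⟨b, hwb⟩ := Set.mem_iUnion.mp hwu
    rcases eq_or_ne b a with rfl | hba
    · exact ⟨hwb, hwn⟩
    · exfalso
      have h3 := hfar b a hba w hwb w1 hw1a
      have d1 : hammingDist v w = 1 := hwn
      have d2 : hammingDist v w1 = 1 := hw1.2
      have htri := hammingDist_triangle w v w1
      rw [hammingDist_comm w v] at htri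
      omega
  refine Set.mem_iUnion.mpr ⟨a, hcl a v ?_⟩
  have hle := Set.ncard_le_ncard hsub (Set.toFinite _)
  show (2 : ℤ) ≤ _
  exact le_trans hv' (by exact_mod_cast hle)

lemma constraint_subset (hn : ∀ i, 2 ≤ n i) {x y : Π i, Fin (n i)} {A B : Set (Fin t)}
    (h : subcube x A ⊆ subcube y B) : B ⊆ A := by
  intro i hiB
  by_contra hiA
  haveI : Nontrivial (Fin (n i)) :=
    ⟨⟨⟨0, by have := hn i; omega⟩, ⟨1, by have := hn i; omega⟩, by simp [Fin.ext_iff]⟩⟩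
  obtain ⟨c, hc⟩ := exists_ne (x i)
  have hz : Function.update x i c ∈ subcube x A := by
    intro j hj
    rcases eq_or_ne j i with rfl | hne
    · exact absurd hj hiA
    · rw [Function.update_of_ne hne]
  have h1 := h hz i hiB
  have h2 := h (mem_subcube_self x A) i hiB
  rw [Function.update_self] at h1
  exact hc (h1.trans h2.symm)

/-- A "labelled subcube". -/
def cubeP (p : (Π i, Fin (n i)) × Finset (Fin t)) : Set (Π i, Fin (n i)) :=
  subcube p.1 ↑p.2

def wP (p : (Π i, Fin (n i)) × Finset (Fin t)) : ℕ := t - p.2.card + 2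

def USet (s : Multiset ((Π i, Fin (n i)) × Finset (Fin t))) : Set (Π i, Fin (n i)) :=
  {z | ∃ p ∈ s, z ∈ cubeP p}

def Far (p q : (Π i, Fin (n i)) × Finset (Fin t)) : Prop :=
  ∀ u ∈ cubeP p, ∀ v ∈ cubeP q, 3 ≤ hammingDist u v

def Sep (s : Multiset ((Π i, Fin (n i)) × Finset (Fin t))) : Prop :=
  ∀ p ∈ s, ∀ q ∈ s.erase p, Far p q

def wsum (s : Multiset ((Π i, Fin (n i)) × Finset (Fin t))) : ℕ := (s.map wP).sum

lemma merge_step (p q : (Π i, Fin (n i)) × Finset (Fin t)) (u v : Π i, Fin (n i))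
    (hu : u ∈ cubeP p) (hv : v ∈ cubeP q) (hd : hammingDist u v ≤ 2) :
    ∃ m : (Π i, Fin (n i)) × Finset (Fin t),
      cubeP p ⊆ cubeP m ∧ cubeP q ⊆ cubeP m ∧ wP m ≤ wP p + wP q := by
  classical
  refine ⟨(p.1, (p.2 ∩ q.2).filter fun i => p.1 i = q.1 i), ?_, ?_, ?_⟩
  · intro z hz i hi
    simp only [Finset.coe_filter, Set.mem_setOf_eq, Finset.mem_inter] at hi
    exact hz i hi.1.1
  · intro z hz i hi
    simp only [Finset.coe_filter, Set.mem_setOf_eq, Finset.mem_inter] at hi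
    rw [hz i hi.1.2]
    exact hi.2.symm
  · have h1 : (p.2 ∪ q.2).card + (p.2 ∩ q.2).card = p.2.card + q.2.card :=
      Finset.card_union_add_card_inter _ _
    have h2 : (p.2 ∪ q.2).card ≤ t := by
      have := Finset.card_le_univ (p.2 ∪ q.2)
      simpa using this
    have hsplit : ((p.2 ∩ q.2).filter fun i => p.1 i = q.1 i).card
        + ((p.2 ∩ q.2).filter fun i => ¬ p.1 i = q.1 i).card = (p.2 ∩ q.2).card :=
      Finset.card_filter_add_card_filter_not _
    have h4 : ((p.2 ∩ q.2).filter fun i => ¬ p.1 i = q.1 i).card ≤ hammingDist u v := by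
      rw [hammingDist]
      apply Finset.card_le_card
      intro i hi
      simp only [Finset.mem_filter, Finset.mem_inter] at hi
      simp only [Finset.mem_filter, Finset.mem_univ, true_and]
      rw [hu i hi.1.1, hv i hi.1.2]
      exact hi.2
    have h5 : ((p.2 ∩ q.2).filter fun i => p.1 i = q.1 i).card ≤ t := by
      have := Finset.card_le_univ ((p.2 ∩ q.2).filter fun i => p.1 i = q.1 i)
      simpa using this
    simp only [wP]
    omega

lemma exists_sep : ∀ (N : ℕ) (s : Multiset ((Π i, Fin (n i)) × Finset (Fin t))),
    Multiset.card s ≤ N →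
    ∃ s', Sep s' ∧ USet s ⊆ USet s' ∧ wsum s' ≤ wsum s := by
  intro N
  induction N with
  | zero =>
    intro s hs
    have hs0 : s = 0 := Multiset.card_eq_zero.mp (Nat.le_zero.mp hs)
    subst hs0
    exact ⟨0, fun p hp => by simp at hp, subset_rfl, le_rfl⟩
  | succ N ih =>
    intro s hs
    by_cases hsep : Sep s
    · exact ⟨s, hsep, subset_rfl, le_rfl⟩
    · simp only [Sep, not_forall] at hsep
      obtain ⟨p, hp, q, hq, hfar⟩ := hsep
      simp only [Far, not_forall] at hfar
      obtain ⟨u, hu, v, hv, hd⟩ := hfar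
      obtain ⟨m, h1, h2, h3⟩ := merge_step p q u v hu hv (by omega)
      set rest := (s.erase p).erase q with hrest
      have hs_eq : s = p ::ₘ q ::ₘ rest := by
        rw [hrest, Multiset.cons_erase hq, Multiset.cons_erase hp]
      have hcard2 : Multiset.card (m ::ₘ rest) ≤ N := by
        have hce := congrArg Multiset.card hs_eq
        simp only [Multiset.card_cons] at hce ⊢
        omega
      obtain ⟨s', hsep', hsub', hw'⟩ := ih (m ::ₘ rest) hcard2
      refine ⟨s', hsep', ?_, ?_⟩
      · intro z hz
        apply hsub'
        obtain ⟨r, hr, hzr⟩ := hz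
        rw [hs_eq] at hr
        rcases Multiset.mem_cons.mp hr with rfl | hr
        · exact ⟨m, Multiset.mem_cons_self _ _, h1 hzr⟩
        · rcases Multiset.mem_cons.mp hr with rfl | hr
          · exact ⟨m, Multiset.mem_cons_self _ _, h2 hzr⟩
          · exact ⟨r, Multiset.mem_cons_of_mem hr, hzr⟩
      · refine le_trans hw' ?_
        rw [hs_eq]
        simp only [wsum, Multiset.map_cons, Multiset.sum_cons]
        omega

lemma USet_closed {s : Multiset ((Π i, Fin (n i)) × Finset (Fin t))} (hsep : Sep s) :
    activationClosed (hammingGraph n) (fun _ => (2 : ℤ)) (USet s) := by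
  have hU : USet s = ⋃ (p : {p // p ∈ s}), cubeP p.1 := by
    ext z
    simp only [USet, Set.mem_setOf_eq, Set.mem_iUnion]
    exact ⟨fun ⟨p, hp, hz⟩ => ⟨⟨p, hp⟩, hz⟩, fun ⟨⟨p, hp⟩, hz⟩ => ⟨p, hp, hz⟩⟩
  rw [hU]
  apply iUnion_far_closed
  · intro j; exact subcube_closed _ _
  · intro a b hab
    have hne : b.1 ≠ a.1 := fun h => hab (Subtype.ext h.symm)
    exact hsep a.1 a.2 b.1 ((Multiset.mem_erase_of_ne hne).mpr b.2)

lemma walk_in_cube {s : Multiset ((Π i, Fin (n i)) × Finset (Fin t))} (hsep : Sep s)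
    {p : (Π i, Fin (n i)) × Finset (Fin t)} (hp : p ∈ s)
    {x : Π i, Fin (n i)} {A : Set (Fin t)} (hxp : x ∈ cubeP p)
    (hcov : subcube x A ⊆ USet s) : subcube x A ⊆ cubeP p := by
  suffices h : ∀ d, ∀ z ∈ subcube x A, hammingDist x z ≤ d → z ∈ cubeP p from
    fun z hz => h (hammingDist x z) z hz le_rfl
  intro d
  induction d with
  | zero =>
    intro z hz hd
    have hxz : x = z := eq_of_hammingDist_eq_zero (Nat.le_zero.mp hd)
    rwa [← hxz]
  | succ d ih =>
    intro z hz hd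
    rcases eq_or_ne z x with rfl | hne
    · exact hxp
    · obtain ⟨i, hi⟩ := Function.ne_iff.mp hne
      have hiA : i ∉ A := fun h => hi (hz i h)
      set z' := Function.update z i (x i) with hz'def
      have hz'A : z' ∈ subcube x A := by
        intro j hj
        rcases eq_or_ne j i with rfl | hj'
        · exact absurd hj hiA
        · rw [hz'def, Function.update_of_ne hj']; exact hz j hj
      have hdist' : hammingDist x z' + 1 ≤ hammingDist x z := by
        rw [hammingDist, hammingDist]
        have hmemi : i ∈ Finset.univ.filter fun j => x j ≠ z j := by
          simp only [Finset.mem_filter, Finset.mem_univ, true_and]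
          exact fun h => hi (h.symm)
        have hss : (Finset.univ.filter fun j => x j ≠ z' j) ⊆
            (Finset.univ.filter fun j => x j ≠ z j).erase i := by
          intro j hj
          simp only [Finset.mem_filter, Finset.mem_univ, true_and] at hj
          rcases eq_or_ne j i with rfl | hji
          · exact absurd (by rw [hz'def, Function.update_self]) hj
          · rw [Finset.mem_erase]
            refine ⟨hji, ?_⟩
            simp only [Finset.mem_filter, Finset.mem_univ, true_and]
            rwa [hz'def, Function.update_of_ne hji] at hj
        have := Finset.card_le_card hss
        have hce := Finset.card_erase_of_mem hmemi
        have hpos : 0 < (Finset.univ.filter fun j => x j ≠ z j).card :=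
          Finset.card_pos.mpr ⟨i, hmemi⟩
        omega
      have hz'p : z' ∈ cubeP p := ih z' hz'A (by omega)
      obtain ⟨q, hq, hzq⟩ := hcov hz
      rcases eq_or_ne q p with rfl | hqp
      · exact hzq
      · exfalso
        have h3 := hsep p hp q ((Multiset.mem_erase_of_ne hqp).mpr hq) z' hz'p z hzq
        have hle : hammingDist z' z ≤ 1 := by
          rw [hammingDist]
          have : (Finset.univ.filter fun j => z' j ≠ z j) ⊆ {i} := by
            intro j hj
            simp only [Finset.mem_filter, Finset.mem_univ, true_and] at hj
            rcases eq_or_ne j i with rfl | hji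
            · exact Finset.mem_singleton_self _
            · exact absurd (by rw [hz'def, Function.update_of_ne hji]) hj
          have := Finset.card_le_card this
          simpa using this
        omega

lemma one_cube (hn : ∀ i, 2 ≤ n i) {S' : Set (Π i, Fin (n i))}
    {x : Π i, Fin (n i)} {A : Set (Fin t)}
    (hc : activationClosure (hammingGraph n) (fun _ => (2 : ℤ)) S' = subcube x A) :
    (t : ℤ) - A.ncard + 2 ≤ 2 * S'.ncard := by
  classical
  set s0 : Multiset ((Π i, Fin (n i)) × Finset (Fin t)) :=
    S'.toFinset.val.map (fun v => (v, (Finset.univ : Finset (Fin t)))) with hs0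
  have hw0 : wsum s0 = 2 * S'.ncard := by
    rw [wsum, hs0, Multiset.map_map]
    have hconst : (wP ∘ fun v : Π i, Fin (n i) => (v, (Finset.univ : Finset (Fin t)))) =
        fun _ => 2 := by
      funext v
      simp [wP, Finset.card_univ]
    rw [hconst, Multiset.map_const', Multiset.sum_replicate, smul_eq_mul]
    have : Multiset.card S'.toFinset.val = S'.ncard := by
      rw [Set.ncard_eq_toFinset_card']; rfl
    rw [this, Nat.mul_comm]
  have hcov0 : S' ⊆ USet s0 := by
    intro z hz
    exact ⟨(z, Finset.univ), Multiset.mem_map.mpr ⟨z, by simpa using hz, rfl⟩, fun i _ => rfl⟩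
  obtain ⟨s, hsep, hsub, hw⟩ := exists_sep (Multiset.card s0) s0 le_rfl
  have hclsub : activationClosure (hammingGraph n) (fun _ => (2 : ℤ)) S' ⊆ USet s :=
    activationClosure_subset (hcov0.trans hsub) (USet_closed hsep)
  rw [hc] at hclsub
  obtain ⟨p, hp, hxp⟩ := hclsub (mem_subcube_self x A)
  have hsubp := walk_in_cube hsep hp hxp hclsub
  have hBA : (↑p.2 : Set (Fin t)) ⊆ A := constraint_subset hn hsubp
  have hcard : p.2.card ≤ A.ncard := by
    have := Set.ncard_le_ncard hBA (Set.toFinite _)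
    rwa [Set.ncard_coe_finset] at this
  have hwp : wP p ≤ wsum s :=
    Multiset.single_le_sum (fun a _ => Nat.zero_le a) _ (Multiset.mem_map_of_mem wP hp)
  have hA_le : A.ncard ≤ t := by
    have := Set.ncard_le_ncard (Set.subset_univ A) (Set.toFinite _)
    rwa [Set.ncard_univ, Nat.card_eq_fintype_card, Fintype.card_fin] at this
  have hcardt : p.2.card ≤ t := by
    have := Finset.card_le_univ p.2
    simpa using this
  have hwpval : wP p = t - p.2.card + 2 := rfl
  have hfin : t - p.2.card + 2 ≤ 2 * S'.ncard := by
    rw [← hwpval, ← hw0]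
    exact le_trans hwp hw
  omega

end Hamming

end HammingBootstrap

open HammingBootstrap in
theorem closure_union_subcubes_card_bound {t : ℕ} (n : Fin t → ℕ)
    (hn : ∀ i, 2 ≤ n i) (S : Set (Π i, Fin (n i))) (hS : S.Nonempty)
    (k : ℕ) (x : Fin k → Π i, Fin (n i)) (A : Fin k → Set (Fin t))
    (hclos : activationClosure (hammingGraph n) (fun _ => (2 : ℤ)) S =
      ⋃ i : Fin k, subcube (x i) (A i))
    (hdist : ∀ i j : Fin k, i ≠ j →
      ∀ u ∈ subcube (x i) (A i), ∀ v ∈ subcube (x j) (A j), 3 ≤ hammingDist u v) :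
    ((2 + t : ℤ)) * k - 2 * S.ncard ≤ ∑ i : Fin k, ((A i).ncard : ℤ) := by
  classical
  have key : ∀ i : Fin k,
      (t : ℤ) - (A i).ncard + 2 ≤ 2 * (S ∩ subcube (x i) (A i)).ncard := by
    intro i
    apply one_cube hn
    apply Set.Subset.antisymm
    · exact activationClosure_subset Set.inter_subset_right (subcube_closed _ _)
    · set T : Fin k → Set (Π i, Fin (n i)) := fun j =>
        if j = i then activationClosure (hammingGraph n) (fun _ => (2 : ℤ))
          (S ∩ subcube (x i) (A i))
        else subcube (x j) (A j) with hT
      have hTsub : ∀ j, T j ⊆ subcube (x j) (A j) := by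
        intro j
        by_cases h : j = i
        · subst h
          simp only [hT, if_pos rfl]
          exact activationClosure_subset Set.inter_subset_right (subcube_closed _ _)
        · simp only [hT, if_neg h]
          exact subset_rfl
      have hTclosed : ∀ j, activationClosed (hammingGraph n) (fun _ => (2 : ℤ)) (T j) := by
        intro j
        by_cases h : j = i
        · simp only [hT, if_pos h]
          exact activationClosure_closed
        · simp only [hT, if_neg h]
          exact subcube_closed _ _
      have hUclosed := iUnion_far_closed T hTclosed
        (fun a b hab u hu v hv => hdist a b hab u (hTsub a hu) v (hTsub b hv))
      have hScov : S ⊆ ⋃ j, T j := by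
        intro z hz
        have hz' : z ∈ ⋃ j, subcube (x j) (A j) := by
          rw [← hclos]; exact subset_activationClosure hz
        obtain ⟨j, hzj⟩ := Set.mem_iUnion.mp hz'
        by_cases h : j = i
        · subst h
          refine Set.mem_iUnion.mpr ⟨j, ?_⟩
          simp only [hT, if_pos rfl]
          exact subset_activationClosure ⟨hz, hzj⟩
        · refine Set.mem_iUnion.mpr ⟨j, ?_⟩
          simp only [hT, if_neg h]
          exact hzj
      have hclsub : activationClosure (hammingGraph n) (fun _ => (2 : ℤ)) S ⊆ ⋃ j, T j :=
        activationClosure_subset hScov hUclosed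
      intro z hzc
      have hzU : z ∈ ⋃ j, T j := by
        apply hclsub
        rw [hclos]
        exact Set.mem_iUnion.mpr ⟨i, hzc⟩
      obtain ⟨j, hzj⟩ := Set.mem_iUnion.mp hzU
      by_cases h : j = i
      · subst h
        simpa only [hT, if_pos rfl] using hzj
      · exfalso
        have h3 := hdist j i h z (hTsub j hzj) z hzc
        simp [hammingDist_self] at h3
  have hsum : ∑ i : Fin k, (S ∩ subcube (x i) (A i)).ncard ≤ S.ncard := by
    have hdisj : ∀ i ∈ (Finset.univ : Finset (Fin k)), ∀ j ∈ (Finset.univ : Finset (Fin k)),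
        i ≠ j → Disjoint ((S ∩ subcube (x i) (A i)).toFinset)
          ((S ∩ subcube (x j) (A j)).toFinset) := by
      intro i _ j _ hij
      rw [Finset.disjoint_left]
      intro a ha hb
      rw [Set.mem_toFinset] at ha hb
      have h3 := hdist i j hij a ha.2 a hb.2
      simp [hammingDist_self] at h3
    calc ∑ i : Fin k, (S ∩ subcube (x i) (A i)).ncard
        = ∑ i : Fin k, ((S ∩ subcube (x i) (A i)).toFinset.card) := by
          simp [Set.ncard_eq_toFinset_card']
      _ = (Finset.univ.biUnion fun i => (S ∩ subcube (x i) (A i)).toFinset).card :=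
          (Finset.card_biUnion hdisj).symm
      _ ≤ S.toFinset.card := by
          apply Finset.card_le_card
          intro a ha
          rw [Finset.mem_biUnion] at ha
          obtain ⟨i, _, hai⟩ := ha
          rw [Set.mem_toFinset] at hai ⊢
          exact hai.1
      _ = S.ncard := (Set.ncard_eq_toFinset_card' S).symm
  have hsum' : ∑ i : Fin k, ((t : ℤ) - (A i).ncard + 2) ≤ 2 * S.ncard := by
    calc ∑ i : Fin k, ((t : ℤ) - (A i).ncard + 2)
        ≤ ∑ i : Fin k, 2 * ((S ∩ subcube (x i) (A i)).ncard : ℤ) :=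
          Finset.sum_le_sum fun i _ => key i
      _ = 2 * ∑ i : Fin k, ((S ∩ subcube (x i) (A i)).ncard : ℤ) := by
          rw [Finset.mul_sum]
      _ ≤ 2 * S.ncard := by
          have : (∑ i : Fin k, ((S ∩ subcube (x i) (A i)).ncard : ℤ))
              ≤ (S.ncard : ℤ) := by exact_mod_cast hsum
          linarith
  have hexp : ∑ i : Fin k, ((t : ℤ) - (A i).ncard + 2)
      = (2 + t) * k - ∑ i : Fin k, ((A i).ncard : ℤ) := by
    rw [Finset.sum_add_distrib, Finset.sum_sub_distrib, Finset.sum_const, Finset.sum_const]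
    simp only [Finset.card_univ, Fintype.card_fin, nsmul_eq_mul]
    ring
  linarith
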